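/- arXiv:2407.12384 — 4 statements merged into one kernel-verified Lean document; each statement's English description precedes it below -/
import Mathlib

section
/- There exists a universal constant C > 0 such that for all real q ≥ 2 and all integers m ≥ 1, (Γ(m/2)/Γ((q+m)/2))^{1/q} ≤ C m^{−1/2}. -/
open Real

lemma key_gamma (x t : ℝ) (hx : 0 < x) (ht : 1 ≤ t) :
    x ^ t * Gamma x ≤ Gamma (x + t) := by
  rcases eq_or_lt_of_le ht with h | h
  · rw [← h, rpow_one, ← Gamma_add_one hx.ne', add_comm]
  · have ht0 : 0 < t := by linarith
    have hb : 0 < 1 / t := by positivity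
    have ha : 0 < 1 - 1 / t := by
      rw [sub_pos, div_lt_one ht0]; exact h
    have hxt : 0 < x + t := by linarith
    have hG := Gamma_mul_add_mul_le_rpow_Gamma_mul_rpow_Gamma hx hxt ha hb (by ring)
    have hcomb : (1 - 1 / t) * x + 1 / t * (x + t) = x + 1 := by
      field_simp; ring
    rw [hcomb, Gamma_add_one hx.ne'] at hG
    -- hG : x * Gamma x ≤ Gamma x ^ (1 - 1/t) * Gamma (x+t) ^ (1/t)
    have hGx : 0 < Gamma x := Gamma_pos_of_pos hx
    have hGxt : 0 < Gamma (x + t) := Gamma_pos_of_pos hxt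
    have h2 : x * Gamma x ^ (1 / t) ≤ Gamma (x + t) ^ (1 / t) := by
      have := mul_le_mul_of_nonneg_right hG (le_of_lt (rpow_pos_of_pos hGx (1/t - 1)))
      calc x * Gamma x ^ (1 / t) = x * Gamma x * Gamma x ^ (1 / t - 1) := by
            rw [mul_assoc]
            congr 1
            rw [show (1:ℝ)/t = 1 + (1/t - 1) by ring, rpow_add hGx, rpow_one]; ring_nf
        _ ≤ Gamma x ^ (1 - 1 / t) * Gamma (x + t) ^ (1 / t) * Gamma x ^ (1 / t - 1) := this
        _ = Gamma (x + t) ^ (1 / t) * (Gamma x ^ (1 - 1 / t) * Gamma x ^ (1 / t - 1)) := by ring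
        _ = Gamma (x + t) ^ (1 / t) := by
            rw [← rpow_add hGx]; norm_num
    have h3 := rpow_le_rpow (by positivity) h2 (le_of_lt ht0)
    rwa [mul_rpow hx.le (by positivity), ← rpow_mul hGx.le,
      ← rpow_mul hGxt.le, one_div, inv_mul_cancel₀ ht0.ne', rpow_one, rpow_one] at h3
    
/-- There is a universal `C > 0` such that for all real `q ≥ 2`
and all integers `m ≥ 1`, `(Γ(m/2)/Γ((q+m)/2))^{1/q} ≤ C m^{-1/2}`. -/
theorem stmt_8 : ∃ C > (0:ℝ), ∀ q : ℝ, 2 ≤ q → ∀ m : ℕ, 1 ≤ m →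
    (Real.Gamma ((m : ℝ) / 2) / Real.Gamma ((q + (m : ℝ)) / 2)) ^ (1 / q) ≤
      C * (m : ℝ) ^ (-(1 / 2) : ℝ) := by
  refine ⟨Real.sqrt 2, by positivity, fun q hq m hm => ?_⟩
  have hm0 : (0:ℝ) < m := by exact_mod_cast hm
  have hx : (0:ℝ) < (m:ℝ)/2 := by positivity
  have ht : (1:ℝ) ≤ q / 2 := by linarith
  have hq0 : (0:ℝ) < q := by linarith
  have key := key_gamma ((m:ℝ)/2) (q/2) hx ht
  have hxt : ((m:ℝ)/2 + q/2) = (q + m)/2 := by ring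
  rw [hxt] at key
  have hG1 : 0 < Gamma ((m:ℝ)/2) := Gamma_pos_of_pos hx
  have hG2 : 0 < Gamma ((q + (m:ℝ))/2) := Gamma_pos_of_pos (by positivity)
  have hdiv : Gamma ((m:ℝ)/2) / Gamma ((q + (m:ℝ))/2) ≤ ((m:ℝ)/2) ^ (-(q/2)) := by
    rw [div_le_iff₀ hG2, rpow_neg hx.le, inv_mul_eq_div, le_div_iff₀ (by positivity)]
    linarith [key]
  have h2 := rpow_le_rpow (by positivity) hdiv (by positivity : (0:ℝ) ≤ 1/q)
  rw [← rpow_mul hx.le] at h2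
  have he : -(q/2) * (1/q) = -(1/2) := by field_simp
  rw [he] at h2
  refine h2.trans (le_of_eq ?_)
  rw [div_rpow hm0.le (by norm_num : (0:ℝ) ≤ 2), Real.rpow_neg (by norm_num : (0:ℝ) ≤ 2),
    div_eq_mul_inv, inv_inv, mul_comm, Real.sqrt_eq_rpow]
end

section
/- Let G be a vertex-transitive graph on n vertices whose adjacency matrix has maximal eigenvalue multiplicity M_n. Then every L²-normalized eigenvector u of the adjacency matrix satisfies, for all q ∈ [2, ∞], ‖u‖_{ℓ^q} ≤ M_n^{1/2} n^{1/q − 1/2}. -/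
section aux

variable {V : Type*} [Fintype V] [DecidableEq V]

open scoped RealInnerProductSpace

set_option linter.unusedSectionVars false

lemma aux_sum_apply {ι : Type*} (s : Finset ι) (g : ι → EuclideanSpace ℝ V) (x : V) :
    (∑ i ∈ s, g i) x = ∑ i ∈ s, g i x := by
  induction s using Finset.cons_induction with
  | empty => rfl
  | cons a s ha ih =>
    rw [Finset.sum_cons, Finset.sum_cons, ← ih]
    rfl

/-- Parseval-type identity: squared norm of the orthogonal projection as the sum of
squared coefficients in an orthonormal basis of the subspace. -/
lemma aux_norm_proj_sq (W : Submodule ℝ (EuclideanSpace ℝ V)) [FiniteDimensional ℝ W]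
    {ι : Type*} [Fintype ι] (b : OrthonormalBasis ι ℝ W) (x : EuclideanSpace ℝ V) :
    ‖(W.orthogonalProjectionOnto x : EuclideanSpace ℝ V)‖ ^ 2 =
      ∑ i, ⟪(b i : EuclideanSpace ℝ V), x⟫ ^ 2 := by
  have hnorm : ‖(W.orthogonalProjectionOnto x : EuclideanSpace ℝ V)‖ =
      ‖W.orthogonalProjectionOnto x‖ := Submodule.norm_coe _
  have h2 : ‖W.orthogonalProjectionOnto x‖ = ‖b.repr (W.orthogonalProjectionOnto x)‖ :=
    (b.repr.norm_map _).symm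
  have h3 : ∀ i, b.repr (W.orthogonalProjectionOnto x) i = ⟪(b i : EuclideanSpace ℝ V), x⟫ := by
    intro i
    rw [b.repr_apply_apply]
    exact Submodule.inner_orthogonalProjectionOnto_eq_of_mem_left _ _
  rw [hnorm, h2, EuclideanSpace.norm_eq, Real.sq_sqrt (by positivity)]
  refine Finset.sum_congr rfl fun i _ => ?_
  rw [h3 i, Real.norm_eq_abs, sq_abs]

end aux

set_option maxHeartbeats 2000000

/-- For a vertex-transitive graph `G` on `n` vertices whose
adjacency matrix has all eigenspaces of dimension at most `M`, every
`ℓ²`-normalized eigenvector `u` satisfies `‖u‖_{ℓ^q} ≤ √M · n^{1/q - 1/2}`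
for all `q ∈ [2,∞]` (the case `q = ∞` reading `‖u‖_∞ ≤ √M · n^{-1/2}`). -/
theorem stmt_11 (V : Type*) [Fintype V] [DecidableEq V]
    (G : SimpleGraph V) [DecidableRel G.Adj]
    (htrans : ∀ x y : V, ∃ e : G ≃g G, e x = y)
    (M : ℕ)
    (hM : ∀ c : ℝ,
      Module.finrank ℝ ↥(Module.End.eigenspace (Matrix.mulVecLin (G.adjMatrix ℝ)) c) ≤ M)
    (u : V → ℝ) (c : ℝ) (heig : (G.adjMatrix ℝ).mulVec u = c • u)
    (hnorm : ∑ x, (u x) ^ 2 = 1) :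
    (∀ q : ℝ, 2 ≤ q →
      (∑ x, |u x| ^ q) ^ (1 / q) ≤
        Real.sqrt M * (Fintype.card V : ℝ) ^ (1 / q - 1 / 2)) ∧
    (∀ x, |u x| ≤ Real.sqrt M * (Fintype.card V : ℝ) ^ (-(1 / 2) : ℝ)) := by
  classical
  open scoped RealInnerProductSpace in
  -- basic setup
  set A := G.adjMatrix ℝ with hA
  set n := Fintype.card V with hn
  have hVne : Nonempty V := by
    by_contra h
    rw [not_nonempty_iff] at h
    simp [Finset.sum_eq_zero] at hnorm
  have hn1 : 1 ≤ (n : ℝ) := by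
    have := Fintype.card_pos (α := V)
    exact_mod_cast this
  have hn0 : (0:ℝ) < n := by linarith
  -- the eigenspace, viewed inside Euclidean space
  set L : (V → ℝ) ≃ₗ[ℝ] EuclideanSpace ℝ V := (WithLp.linearEquiv 2 ℝ (V → ℝ)).symm with hL
  set W : Submodule ℝ (EuclideanSpace ℝ V) :=
    (Module.End.eigenspace (Matrix.mulVecLin A) c).map
      (L : (V → ℝ) →ₗ[ℝ] EuclideanSpace ℝ V) with hW
  have hmemW : ∀ v : EuclideanSpace ℝ V, v ∈ W ↔ A.mulVec (fun x => v x) = c • fun x => v x := by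
    intro v
    constructor
    · rintro ⟨w, hw, rfl⟩
      exact Module.End.mem_eigenspace_iff.mp hw
    · intro h
      exact ⟨WithLp.equiv 2 (V → ℝ) v, Module.End.mem_eigenspace_iff.mpr h, rfl⟩
  set d : ℕ := Module.finrank ℝ W with hd
  have hdM : d ≤ M := by
    rw [hd, hW, LinearEquiv.finrank_map_eq]
    exact hM c
  -- u as an element of Euclidean space
  set U : EuclideanSpace ℝ V := (WithLp.equiv 2 (V → ℝ)).symm u with hU
  have hUx : ∀ x, U x = u x := fun x => rfl
  have hUW : U ∈ W := by
    rw [hmemW]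
    exact heig
  have hUnorm : ‖U‖ ^ 2 = 1 := by
    rw [EuclideanSpace.norm_eq, Real.sq_sqrt (by positivity)]
    simpa [sq_abs, hUx] using hnorm
  have hU0 : U ≠ 0 := by
    intro h
    rw [h] at hUnorm
    simp at hUnorm
  have hd1 : 1 ≤ d := by
    rw [hd, Nat.one_le_iff_ne_zero]
    intro h
    have hbot : W = ⊥ := Submodule.finrank_eq_zero.mp h
    exact hU0 (by simpa [hbot] using hUW)
  -- the orthonormal basis of the eigenspace and the diagonal of the projection
  set b : OrthonormalBasis (Fin d) ℝ W := stdOrthonormalBasis ℝ W with hb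
  set f : V → ℝ := fun x =>
    ‖(W.orthogonalProjectionOnto (EuclideanSpace.single x 1) : EuclideanSpace ℝ V)‖ ^ 2 with hf
  have hfb : ∀ x, f x = ∑ i, ((b i : EuclideanSpace ℝ V) x) ^ 2 := by
    intro x
    simp only [hf]
    rw [aux_norm_proj_sq W b (EuclideanSpace.single x 1)]
    refine Finset.sum_congr rfl fun i _ => ?_
    rw [EuclideanSpace.inner_single_right]
    simp
  -- Step A: pointwise bound by the projection diagonal
  have keyA : ∀ x, (u x) ^ 2 ≤ f x := by
    intro x
    have hux : u x = ∑ i, ⟪(b i : EuclideanSpace ℝ V), U⟫ * (b i : EuclideanSpace ℝ V) x := by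
      have hrepr := b.sum_repr ⟨U, hUW⟩
      have hUeq : U = ∑ i, b.repr ⟨U, hUW⟩ i • ((b i : EuclideanSpace ℝ V)) := by
        conv_lhs => rw [show U = ((⟨U, hUW⟩ : W) : EuclideanSpace ℝ V) from rfl, ← hrepr]
        push_cast
        rfl
      have happ : U x = ∑ i, b.repr ⟨U, hUW⟩ i * (b i : EuclideanSpace ℝ V) x := by
        conv_lhs => rw [hUeq]
        rw [aux_sum_apply]
        exact Finset.sum_congr rfl fun i _ => rfl
      rw [← hUx x, happ]
      refine Finset.sum_congr rfl fun i _ => ?_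
      congr 1
      rw [b.repr_apply_apply]
      exact rfl
    have hcs := Finset.sum_mul_sq_le_sq_mul_sq Finset.univ
      (fun i => ⟪(b i : EuclideanSpace ℝ V), U⟫) (fun i => (b i : EuclideanSpace ℝ V) x)
    have hpars : ∑ i, ⟪(b i : EuclideanSpace ℝ V), U⟫ ^ 2 = 1 := by
      have hps := aux_norm_proj_sq W b U
      have hproj : ((W.orthogonalProjectionOnto U : EuclideanSpace ℝ V)) = U :=
        Submodule.starProjection_eq_self_iff.mpr hUW
      rw [hproj] at hps
      simpa [hUnorm] using hps.symm
    calc (u x) ^ 2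
        = (∑ i, ⟪(b i : EuclideanSpace ℝ V), U⟫ * (b i : EuclideanSpace ℝ V) x) ^ 2 := by
          rw [hux]
      _ ≤ (∑ i, ⟪(b i : EuclideanSpace ℝ V), U⟫ ^ 2) * ∑ i, ((b i : EuclideanSpace ℝ V) x) ^ 2 :=
          hcs
      _ = f x := by rw [hpars, one_mul, hfb]
  -- Step B: the total mass of f is d
  have keyB : ∑ x, f x = (d : ℝ) := by
    have hone : ∀ i : Fin d, ∑ x, ((b i : EuclideanSpace ℝ V) x) ^ 2 = 1 := by
      intro i
      have hbn : ‖(b i : EuclideanSpace ℝ V)‖ = 1 := by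
        rw [Submodule.norm_coe]
        exact b.orthonormal.1 i
      have hEn := EuclideanSpace.norm_eq (b i : EuclideanSpace ℝ V)
      rw [hbn] at hEn
      have h2 : (1:ℝ) = ∑ x, ‖(b i : EuclideanSpace ℝ V) x‖ ^ 2 := by
        calc (1:ℝ) = Real.sqrt (∑ x, ‖(b i : EuclideanSpace ℝ V) x‖ ^ 2) ^ 2 := by
              rw [← hEn]; norm_num
          _ = _ := Real.sq_sqrt (by positivity)
      rw [← Finset.sum_congr rfl fun x (_ : x ∈ Finset.univ) =>
        (by rw [Real.norm_eq_abs, sq_abs] :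
          ‖(b i : EuclideanSpace ℝ V) x‖ ^ 2 = ((b i : EuclideanSpace ℝ V) x) ^ 2)]
      exact h2.symm
    calc ∑ x, f x = ∑ x, ∑ i, ((b i : EuclideanSpace ℝ V) x) ^ 2 :=
          Finset.sum_congr rfl fun x _ => hfb x
      _ = ∑ i, ∑ x, ((b i : EuclideanSpace ℝ V) x) ^ 2 := Finset.sum_comm
      _ = ∑ _i : Fin d, (1:ℝ) := Finset.sum_congr rfl fun i _ => hone i
      _ = (d : ℝ) := by simp
  -- automorphisms act on the eigenspace
  have hmapW : ∀ (σ : G ≃g G) (v : EuclideanSpace ℝ V), v ∈ W →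
      (LinearIsometryEquiv.piLpCongrLeft 2 ℝ ℝ σ.toEquiv) v ∈ W := by
    intro σ v hv
    rw [hmemW] at hv ⊢
    have happ : ∀ y, (LinearIsometryEquiv.piLpCongrLeft 2 ℝ ℝ σ.toEquiv) v y = v (σ.symm y) :=
      fun y => rfl
    funext x
    have hadj : ∀ z, A x (σ z) = A (σ.symm x) z := by
      intro z
      have hiff : G.Adj x (σ z) ↔ G.Adj (σ.symm x) z := by
        conv_lhs => rw [show x = σ (σ.symm x) from (σ.apply_symm_apply x).symm]
        exact σ.map_adj_iff
      rw [hA]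
      rw [SimpleGraph.adjMatrix_apply, SimpleGraph.adjMatrix_apply, if_congr hiff rfl rfl]
    calc A.mulVec (fun y => (LinearIsometryEquiv.piLpCongrLeft 2 ℝ ℝ σ.toEquiv) v y) x
        = ∑ y, A x y * v (σ.symm y) := by
          rw [Matrix.mulVec, dotProduct]
          exact Finset.sum_congr rfl fun y _ => by rw [happ]
      _ = ∑ z, A x (σ z) * v (σ.symm (σ z)) :=
          (Equiv.sum_comp σ.toEquiv (fun y => A x y * v (σ.symm y))).symm
      _ = ∑ z, A (σ.symm x) z * v z := by
          refine Finset.sum_congr rfl fun z _ => ?_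
          rw [hadj z]
          congr 1
          congr 1
          exact congrArg v.ofLp (σ.toEquiv.symm_apply_apply z)
      _ = A.mulVec (fun y => v y) (σ.symm x) := rfl
      _ = (c • fun y => v y) (σ.symm x) := by rw [hv]
      _ = c * v (σ.symm x) := rfl
      _ = (c • fun y => (LinearIsometryEquiv.piLpCongrLeft 2 ℝ ℝ σ.toEquiv) v y) x := by
          show c * v (σ.symm x) = c * (LinearIsometryEquiv.piLpCongrLeft 2 ℝ ℝ σ.toEquiv) v x
          rw [happ x]
  -- equivariance of the projection
  have hequiv : ∀ (σ : G ≃g G) (s : EuclideanSpace ℝ V),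
      (W.orthogonalProjectionOnto ((LinearIsometryEquiv.piLpCongrLeft 2 ℝ ℝ σ.toEquiv) s) :
          EuclideanSpace ℝ V) =
        (LinearIsometryEquiv.piLpCongrLeft 2 ℝ ℝ σ.toEquiv)
          (W.orthogonalProjectionOnto s : EuclideanSpace ℝ V) := by
    intro σ s
    refine (Submodule.eq_starProjection_of_mem_of_inner_eq_zero ?_ ?_ : W.starProjection _ = _)
    · exact hmapW σ _ (W.orthogonalProjectionOnto s).2
    · intro w hw
      have hsymm : (LinearIsometryEquiv.piLpCongrLeft 2 ℝ ℝ σ.toEquiv).symm =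
          LinearIsometryEquiv.piLpCongrLeft 2 ℝ ℝ σ.symm.toEquiv := by
        rw [LinearIsometryEquiv.piLpCongrLeft_symm]
        rfl
      have hw' : (LinearIsometryEquiv.piLpCongrLeft 2 ℝ ℝ σ.toEquiv).symm w ∈ W := by
        rw [hsymm]
        exact hmapW σ.symm _ hw
      have hmapsub : (LinearIsometryEquiv.piLpCongrLeft 2 ℝ ℝ σ.toEquiv) s -
          (LinearIsometryEquiv.piLpCongrLeft 2 ℝ ℝ σ.toEquiv)
            (W.orthogonalProjectionOnto s : EuclideanSpace ℝ V) =
          (LinearIsometryEquiv.piLpCongrLeft 2 ℝ ℝ σ.toEquiv)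
            (s - (W.orthogonalProjectionOnto s : EuclideanSpace ℝ V)) :=
        (map_sub _ _ _).symm
      rw [hmapsub]
      calc ⟪(LinearIsometryEquiv.piLpCongrLeft 2 ℝ ℝ σ.toEquiv)
              (s - (W.orthogonalProjectionOnto s : EuclideanSpace ℝ V)), w⟫
          = ⟪(LinearIsometryEquiv.piLpCongrLeft 2 ℝ ℝ σ.toEquiv)
              (s - (W.orthogonalProjectionOnto s : EuclideanSpace ℝ V)),
            (LinearIsometryEquiv.piLpCongrLeft 2 ℝ ℝ σ.toEquiv)
              ((LinearIsometryEquiv.piLpCongrLeft 2 ℝ ℝ σ.toEquiv).symm w)⟫ := by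
            rw [LinearIsometryEquiv.apply_symm_apply]
        _ = ⟪s - (W.orthogonalProjectionOnto s : EuclideanSpace ℝ V),
              (LinearIsometryEquiv.piLpCongrLeft 2 ℝ ℝ σ.toEquiv).symm w⟫ :=
            LinearIsometryEquiv.inner_map_map _ _ _
        _ = 0 := Submodule.starProjection_inner_eq_zero (K := W) s _ hw'
  -- Step C: invariance of f
  have keyC : ∀ (σ : G ≃g G) (x : V), f (σ x) = f x := by
    intro σ x
    have hsingle : (EuclideanSpace.single (σ x) (1:ℝ)) =
        (LinearIsometryEquiv.piLpCongrLeft 2 ℝ ℝ σ.toEquiv) (EuclideanSpace.single x 1) := by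
      rw [EuclideanSpace.piLpCongrLeft_single]
      rfl
    simp only [hf]
    rw [hsingle, hequiv σ, LinearIsometryEquiv.norm_map]
  -- Step D: f is constant equal to d / n
  have keyD : ∀ x, f x = (d : ℝ) / n := by
    have hconst : ∀ x y, f x = f y := by
      intro x y
      obtain ⟨σ, hσ⟩ := htrans x y
      rw [← hσ, keyC σ x]
    intro x
    have hsum : ∑ y : V, f y = ∑ _y : V, f x := Finset.sum_congr rfl fun y _ => hconst y x
    rw [keyB, Finset.sum_const, Finset.card_univ, nsmul_eq_mul, ← hn] at hsum
    field_simp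
    linarith [hsum]
  -- the pointwise bound
  have hpt : ∀ x, (u x) ^ 2 ≤ (M : ℝ) / n := by
    intro x
    refine (keyA x).trans ?_
    rw [keyD x]
    have hdM' : (d : ℝ) ≤ (M : ℝ) := by exact_mod_cast hdM
    exact div_le_div_of_nonneg_right hdM' hn0.le
  have hM1 : 1 ≤ (M : ℝ) := by
    have : 1 ≤ M := le_trans hd1 hdM
    exact_mod_cast this
  -- sup bound
  have hsup : ∀ x, |u x| ≤ Real.sqrt M * (n : ℝ) ^ (-(1 / 2) : ℝ) := by
    intro x
    have h1 : |u x| ≤ Real.sqrt ((M : ℝ) / n) := by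
      rw [← Real.sqrt_sq_eq_abs]
      exact Real.sqrt_le_sqrt (hpt x)
    refine h1.trans_eq ?_
    rw [Real.sqrt_div (by positivity) (n : ℝ), Real.rpow_neg (by positivity),
      Real.sqrt_eq_rpow (n : ℝ)]
    ring
  refine ⟨?_, hsup⟩
  intro q hq
  have hq0 : 0 < q := by linarith
  set s : ℝ := Real.sqrt ((M:ℝ)/n) with hs
  have habs : ∀ x, |u x| ≤ s := fun x => by
    rw [hs, ← Real.sqrt_sq_eq_abs]
    exact Real.sqrt_le_sqrt (hpt x)
  have hsum : ∑ x, |u x| ^ q ≤ s ^ (q - 2) := by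
    calc ∑ x, |u x| ^ q ≤ ∑ x, s ^ (q-2) * (u x)^2 := by
          refine Finset.sum_le_sum fun x _ => ?_
          rcases eq_or_ne (u x) 0 with h|h
          · rw [h, abs_zero, Real.zero_rpow (ne_of_gt hq0)]
            positivity
          · have h0 : 0 < |u x| := abs_pos.mpr h
            have hsplit : |u x| ^ q = |u x| ^ (q - 2) * |u x| ^ ((2:ℕ) : ℝ) := by
              rw [← Real.rpow_add h0]
              norm_num
            rw [hsplit, Real.rpow_natCast, sq_abs]
            refine mul_le_mul_of_nonneg_right ?_ (sq_nonneg _)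
            exact Real.rpow_le_rpow (abs_nonneg _) (habs x) (by linarith)
      _ = s ^ (q-2) * ∑ x, (u x)^2 := by rw [Finset.mul_sum]
      _ = s ^ (q-2) := by rw [hnorm, mul_one]
  have hle : (∑ x, |u x| ^ q) ^ (1/q) ≤ (s ^ (q-2)) ^ (1/q) := by
    refine Real.rpow_le_rpow ?_ hsum (by positivity)
    positivity
  refine hle.trans ?_
  have hMn0 : (0:ℝ) ≤ (M:ℝ)/n := by positivity
  have hcomp : (s ^ (q-2)) ^ (1/q) =
      (M:ℝ) ^ ((1:ℝ)/2 - 1/q) * (n:ℝ) ^ ((1:ℝ)/q - 1/2) := by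
    rw [hs, Real.sqrt_eq_rpow, ← Real.rpow_mul hMn0, ← Real.rpow_mul hMn0]
    have he : (1:ℝ)/2 * (q-2) * (1/q) = 1/2 - 1/q := by
      field_simp
    rw [he, Real.div_rpow (by positivity) (by positivity), div_eq_mul_inv,
      ← Real.rpow_neg (by positivity), neg_sub]
  rw [hcomp]
  have hMle : (M:ℝ) ^ ((1:ℝ)/2 - 1/q) ≤ Real.sqrt M := by
    rw [Real.sqrt_eq_rpow]
    refine Real.rpow_le_rpow_of_exponent_le hM1 ?_
    have : 0 ≤ 1/q := by positivity
    linarith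
  exact mul_le_mul_of_nonneg_right hMle (Real.rpow_nonneg (by positivity) _)
end

section
/- Let G × H be a product graph where G is vertex-transitive with ℓ vertices and H arbitrary with m vertices, and let A be the adjacency matrix of G × H. Then for any set I of eigenvalues, the diagonal of the spectral projector satisfies Π_I((g,h),(g,h)) = Π_I((g',h),(g',h)) for all g, g' ∈ V(G), h ∈ V(H), and consequently Π_I(x,x) ≤ N(I)/ℓ for every vertex x. -/
open Matrix Polynomial

/-- For a graph product `P` of a vertex-transitive graph `G`
(with `ℓ` vertices) and an arbitrary graph `H` (adjacency in `P` depends only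
on the adjacency/equality relations of the two coordinates), the diagonal of
the spectral projector of the adjacency matrix of `P` is constant along the
`G`-coordinate, and `Π_I(x,x) ≤ N(I)/ℓ` for every vertex `x`. -/
theorem stmt_12 (α β : Type*) [Fintype α] [Fintype β] [DecidableEq α] [DecidableEq β]
    (G : SimpleGraph α) (H : SimpleGraph β) (P : SimpleGraph (α × β))
    [DecidableRel P.Adj]
    (hprod : ∃ R : Prop → Prop → Prop → Prop → Prop,
      ∀ g g' : α, ∀ h h' : β,
        P.Adj (g, h) (g', h') ↔ R (G.Adj g g') (g = g') (H.Adj h h') (h = h'))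
    (htrans : ∀ x y : α, ∃ e : G ≃g G, e x = y)
    (ψ : α × β → α × β → ℝ) (lam : α × β → ℝ)
    (horth : ∀ k l, ∑ j, ψ k j * ψ l j = if k = l then (1:ℝ) else 0)
    (heig : ∀ k, (P.adjMatrix ℝ).mulVec (ψ k) = lam k • ψ k)
    (I : Set ℝ) (S : Finset (α × β)) (hS : ∀ k, k ∈ S ↔ lam k ∈ I) :
    (∀ g g' : α, ∀ h : β,
      ∑ k ∈ S, (ψ k (g, h)) ^ 2 = ∑ k ∈ S, (ψ k (g', h)) ^ 2) ∧
    (∀ x : α × β,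
      ∑ k ∈ S, (ψ k x) ^ 2 ≤ (S.card : ℝ) / (Fintype.card α : ℝ)) := by
  classical
  obtain ⟨R, hR⟩ := hprod
  set A : Matrix (α × β) (α × β) ℝ := P.adjMatrix ℝ with hAdef
  set B : Matrix (α × β) (α × β) ℝ := Matrix.of ψ with hBdef
  have hBBT : B * Bᵀ = 1 := by
    ext k l
    simpa [Matrix.mul_apply, hBdef, Matrix.one_apply] using horth k l
  have hBTB : Bᵀ * B = 1 := mul_eq_one_comm.mp hBBT
  set D : Matrix (α × β) (α × β) ℝ := Matrix.diagonal lam with hDdef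
  have hABT : A * Bᵀ = Bᵀ * D := by
    ext x k
    have h1 := congrFun (heig k) x
    simp only [Matrix.mulVec, dotProduct, Pi.smul_apply, smul_eq_mul] at h1
    rw [Matrix.mul_diagonal]
    simp only [Matrix.mul_apply, Matrix.transpose_apply, hBdef, Matrix.of_apply]
    rw [h1]; ring
  have hA : A = Bᵀ * D * B := by
    calc A = A * (Bᵀ * B) := by rw [hBTB, Matrix.mul_one]
    _ = (A * Bᵀ) * B := by rw [Matrix.mul_assoc]
    _ = Bᵀ * D * B := by rw [hABT]
  have hpow : ∀ m : ℕ, A ^ m = Bᵀ * D ^ m * B := by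
    intro m
    induction m with
    | zero => simp [pow_zero, Matrix.mul_one, hBTB]
    | succ m ih =>
      rw [pow_succ, pow_succ, ih, hA]
      calc Bᵀ * D ^ m * B * (Bᵀ * D * B)
          = Bᵀ * D ^ m * (B * Bᵀ) * D * B := by
            simp only [Matrix.mul_assoc]
        _ = Bᵀ * (D ^ m * D) * B := by rw [hBBT, Matrix.mul_one]; simp only [Matrix.mul_assoc]
  have hconj : ∀ q : ℝ[X], aeval A q = Bᵀ * (aeval D q) * B := by
    intro q
    induction q using Polynomial.induction_on' with
    | add p q hp hq =>
      rw [map_add, map_add, hp, hq, Matrix.mul_add, Matrix.add_mul]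
    | monomial m a =>
      rw [aeval_monomial, aeval_monomial, hpow m]
      simp only [← Algebra.smul_def]
      rw [Matrix.mul_smul, Matrix.smul_mul]
  have hDq : ∀ q : ℝ[X], aeval D q = Matrix.diagonal (fun k => eval (lam k) q) := by
    intro q
    induction q using Polynomial.induction_on' with
    | add p q hp hq =>
      rw [map_add, hp, hq]
      ext i j
      by_cases hij : i = j <;> simp [Matrix.diagonal, hij]
    | monomial m a =>
      rw [aeval_monomial, hDdef, Matrix.diagonal_pow, Matrix.algebraMap_eq_diagonal,
        Matrix.diagonal_mul_diagonal]
      congr 1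
      funext k
      simp [eval_monomial]
  -- interpolating polynomial for the indicator of I on the spectrum
  set f : ℝ → ℝ := fun t => if t ∈ I then 1 else 0 with hfdef
  set s : Finset ℝ := Finset.image lam Finset.univ with hsdef
  set p : ℝ[X] := Lagrange.interpolate s id f with hpdef
  have hinj : Set.InjOn id (s : Set ℝ) := fun a _ b _ hab => hab
  have hp : ∀ k, eval (lam k) p = f (lam k) := by
    intro k
    have hk : lam k ∈ s := Finset.mem_image_of_mem lam (Finset.mem_univ k)
    simpa [hpdef] using Lagrange.eval_interpolate_at_node f hinj hk
  set E : Matrix (α × β) (α × β) ℝ := Matrix.diagonal (fun k => f (lam k)) with hEdef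
  have hPiA : Bᵀ * E * B = aeval A p := by
    have hE : (Matrix.diagonal fun k => eval (lam k) p) = E := by
      rw [hEdef]
      ext i j
      rcases eq_or_ne i j with rfl | hij
      · simp [hp i]
      · simp [Matrix.diagonal_apply_ne _ hij]
    rw [hconj, hDq, hE]
  have hdiag : ∀ x y, (Bᵀ * E * B) x y = ∑ k ∈ S, ψ k x * ψ k y := by
    intro x y
    rw [Matrix.mul_assoc, Matrix.mul_apply]
    have hterm : ∀ k, Bᵀ x k * (E * B) k y = if k ∈ S then ψ k x * ψ k y else 0 := by
      intro k
      rw [hEdef, Matrix.diagonal_mul]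
      by_cases hk : k ∈ S
      · have : lam k ∈ I := (hS k).mp hk
        simp [hfdef, this, hk, hBdef, mul_comm, mul_assoc, mul_left_comm]
      · have : lam k ∉ I := fun hc => hk ((hS k).mpr hc)
        simp [hfdef, this, hk, hBdef]
    rw [Finset.sum_congr rfl fun k _ => hterm k, Finset.sum_ite_mem, Finset.univ_inter]
  -- invariance of the diagonal under G-automorphisms
  have hsym : ∀ g g' : α, ∀ h : β,
      ∑ k ∈ S, (ψ k (g, h)) ^ 2 = ∑ k ∈ S, (ψ k (g', h)) ^ 2 := by
    intro g g' h
    obtain ⟨e, he⟩ := htrans g g'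
    set σ : (α × β) ≃ (α × β) := (e.toEquiv).prodCongr (Equiv.refl β) with hσdef
    have hAσ : A.submatrix σ σ = A := by
      ext ⟨a, b⟩ ⟨c, d⟩
      have hadj : P.Adj (σ (a, b)) (σ (c, d)) ↔ P.Adj (a, b) (c, d) := by
        show P.Adj (e a, b) (e c, d) ↔ P.Adj (a, b) (c, d)
        have h2 : (e a = e c) ↔ a = c := ⟨fun hx => e.toEquiv.injective hx, fun hx => by rw [hx]⟩
        rw [hR, hR, e.map_adj_iff, h2]
      simp only [Matrix.submatrix_apply, hAdef, SimpleGraph.adjMatrix_apply]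
      by_cases hc : P.Adj (a, b) (c, d)
      · simp [hc, hadj.mpr hc]
      · have hc2 : ¬ P.Adj (σ (a, b)) (σ (c, d)) := fun hx => hc (hadj.mp hx)
        simp [hc, hc2]
    have hPiσ : (Bᵀ * E * B).submatrix σ σ = Bᵀ * E * B := by
      rw [hPiA]
      have h1 : (Matrix.reindexAlgEquiv ℝ ℝ σ.symm).toAlgHom (aeval A p)
          = aeval ((Matrix.reindexAlgEquiv ℝ ℝ σ.symm).toAlgHom A) p :=
        (Polynomial.aeval_algHom_apply _ A p).symm
      have h2 : ∀ M : Matrix (α × β) (α × β) ℝ,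
          (Matrix.reindexAlgEquiv ℝ ℝ σ.symm).toAlgHom M = M.submatrix σ σ := by
        intro M
        simp [Matrix.reindexAlgEquiv_apply, Matrix.reindex_apply]
      rw [← h2 ((aeval A) p), h1, h2, hAσ]
    have hx : σ (g, h) = (g', h) := by
      show (e g, h) = (g', h)
      rw [he]
    have := congrFun (congrFun hPiσ (g, h)) (g, h)
    rw [Matrix.submatrix_apply, hx, hdiag, hdiag] at this
    simp only [sq]
    exact this.symm
  refine ⟨hsym, ?_⟩
  rintro ⟨g, h⟩
  have : Nonempty α := ⟨g⟩
  have hpos : (0 : ℝ) < (Fintype.card α : ℝ) := by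
    exact_mod_cast Fintype.card_pos
  rw [le_div_iff₀ hpos]
  have hnonneg : ∀ (gh : α × β), (0:ℝ) ≤ ∑ k ∈ S, (ψ k gh) ^ 2 :=
    fun gh => Finset.sum_nonneg fun k _ => sq_nonneg _
  calc (∑ k ∈ S, (ψ k (g, h)) ^ 2) * (Fintype.card α : ℝ)
      = ∑ g' : α, ∑ k ∈ S, (ψ k (g', h)) ^ 2 := by
        rw [Finset.sum_congr rfl fun g' _ => hsym g' g h, Finset.sum_const, nsmul_eq_mul,
          Finset.card_univ, mul_comm]
    _ ≤ ∑ j : α × β, ∑ k ∈ S, (ψ k j) ^ 2 := by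
        rw [Fintype.sum_prod_type]
        refine Finset.sum_le_sum fun g' _ => ?_
        exact Finset.single_le_sum (f := fun h' => ∑ k ∈ S, (ψ k (g', h')) ^ 2)
          (fun h' _ => hnonneg _) (Finset.mem_univ h)
    _ = ∑ k ∈ S, ∑ j : α × β, (ψ k j) ^ 2 := Finset.sum_comm
    _ = ∑ k ∈ S, (1 : ℝ) := by
        refine Finset.sum_congr rfl fun k _ => ?_
        have := horth k k
        simp only [if_pos rfl] at this
        simpa [sq] using this
    _ = (S.card : ℝ) := by simp
end

section
/- Let G be a vertex-transitive graph with vertex set V, |V| = n, let E_k be an eigenspace of its adjacency matrix with orthonormal basis ψ_1,…,ψ_{m_k}, and let f : V → ℝ have mean zero. Define B = (β_{ij}) with β_{ij} = Σ_{x∈V} f(x)ψ_i(x)ψ_j(x). Then Tr(B) = 0 and Tr(B²) = Σ_{i,j} β_{ij}² ≤ (m_k/n) ‖f‖_{ℓ²}². -/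
/-- Let `G` be vertex-transitive on `n` vertices, `ψ_1,…,ψ_m` an
orthonormal basis of an eigenspace of the adjacency matrix (so that
`∑_i ψ_i(x)² = m/n` for every `x`, by transitivity), and `f` of mean zero.
With `β_{ij} = ∑_x f(x)ψ_i(x)ψ_j(x)` we have `Tr B = 0` and
`Tr B² = ∑_{ij} β_{ij}² ≤ (m/n)‖f‖_{ℓ²}²`. -/
theorem stmt_13 (V : Type*) [Fintype V] [DecidableEq V]
    (G : SimpleGraph V) [DecidableRel G.Adj]
    (htrans : ∀ x y : V, ∃ e : G ≃g G, e x = y)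
    (n m : ℕ) (hn : Fintype.card V = n)
    (ψ : Fin m → V → ℝ) (lam0 : ℝ)
    (horth : ∀ i j, ∑ x, ψ i x * ψ j x = if i = j then (1:ℝ) else 0)
    (heig : ∀ i, (G.adjMatrix ℝ).mulVec (ψ i) = lam0 • ψ i)
    (hconst : ∀ x, ∑ i, (ψ i x) ^ 2 = (m : ℝ) / (n : ℝ))
    (f : V → ℝ) (hmean : ∑ x, f x = 0) :
    (∑ i, ∑ x, f x * ψ i x * ψ i x) = 0 ∧
    (∑ i, ∑ j, (∑ x, f x * ψ i x * ψ j x) ^ 2 ≤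
      ((m : ℝ) / (n : ℝ)) * ∑ x, (f x) ^ 2) := by
  set K : V → V → ℝ := fun x y => ∑ i, ψ i x * ψ i y with hK
  have hKsym : ∀ x y, K x y = K y x := fun x y =>
    Finset.sum_congr rfl fun i _ => mul_comm _ _
  -- ∑_y K(x,y)^2 = m/n
  have hKsq : ∀ x, ∑ y, (K x y) ^ 2 = (m : ℝ) / (n : ℝ) := by
    intro x
    have h1 : ∀ y, (K x y) ^ 2 = ∑ i, ∑ j, (ψ i x * ψ j x) * (ψ i y * ψ j y) := by
      intro y
      rw [hK, sq, Finset.sum_mul_sum]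
      exact Finset.sum_congr rfl fun i _ => Finset.sum_congr rfl fun j _ => by ring
    calc ∑ y, (K x y) ^ 2
        = ∑ y, ∑ i, ∑ j, (ψ i x * ψ j x) * (ψ i y * ψ j y) :=
          Finset.sum_congr rfl fun y _ => h1 y
      _ = ∑ i, ∑ y, ∑ j, (ψ i x * ψ j x) * (ψ i y * ψ j y) := Finset.sum_comm
      _ = ∑ i, ∑ j, ∑ y, (ψ i x * ψ j x) * (ψ i y * ψ j y) :=
          Finset.sum_congr rfl fun i _ => Finset.sum_comm
      _ = ∑ i, ∑ j, (ψ i x * ψ j x) * (if i = j then (1:ℝ) else 0) := by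
          refine Finset.sum_congr rfl fun i _ => Finset.sum_congr rfl fun j _ => ?_
          rw [← Finset.mul_sum, horth i j]
      _ = ∑ i, (ψ i x) ^ 2 := by
          refine Finset.sum_congr rfl fun i _ => ?_
          simp [sq, mul_ite]
      _ = (m : ℝ) / (n : ℝ) := hconst x
  constructor
  · have h0 : (∑ i, ∑ x, f x * ψ i x * ψ i x) = (∑ x, f x) * ((m : ℝ) / (n : ℝ)) := by
      rw [Finset.sum_comm, Finset.sum_mul]
      refine Finset.sum_congr rfl fun x _ => ?_
      rw [← hconst x, Finset.mul_sum]
      exact Finset.sum_congr rfl fun i _ => by ring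
    rw [h0, hmean, zero_mul]
  · have hB : ∑ i, ∑ j, (∑ x, f x * ψ i x * ψ j x) ^ 2
        = ∑ x, ∑ y, f x * f y * (K x y) ^ 2 := by
      have expand : ∀ i j : Fin m, (∑ x, f x * ψ i x * ψ j x) ^ 2
          = ∑ x, ∑ y, (f x * f y) * ((ψ i x * ψ i y) * (ψ j x * ψ j y)) := by
        intro i j
        rw [sq, Finset.sum_mul_sum]
        exact Finset.sum_congr rfl fun x _ => Finset.sum_congr rfl fun y _ => by ring
      have expandK : ∀ x y : V, f x * f y * (K x y) ^ 2
          = ∑ i, ∑ j, (f x * f y) * ((ψ i x * ψ i y) * (ψ j x * ψ j y)) := by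
        intro x y
        rw [sq, show K x y = ∑ i, ψ i x * ψ i y from rfl, Finset.sum_mul_sum,
          Finset.mul_sum]
        simp only [Finset.mul_sum]
      calc ∑ i, ∑ j, (∑ x, f x * ψ i x * ψ j x) ^ 2
          = ∑ i, ∑ j, ∑ x, ∑ y, (f x * f y) * ((ψ i x * ψ i y) * (ψ j x * ψ j y)) :=
            Finset.sum_congr rfl fun i _ => Finset.sum_congr rfl fun j _ => expand i j
        _ = ∑ i, ∑ x, ∑ j, ∑ y, (f x * f y) * ((ψ i x * ψ i y) * (ψ j x * ψ j y)) :=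
            Finset.sum_congr rfl fun i _ => Finset.sum_comm
        _ = ∑ x, ∑ i, ∑ j, ∑ y, (f x * f y) * ((ψ i x * ψ i y) * (ψ j x * ψ j y)) :=
            Finset.sum_comm
        _ = ∑ x, ∑ i, ∑ y, ∑ j, (f x * f y) * ((ψ i x * ψ i y) * (ψ j x * ψ j y)) :=
            Finset.sum_congr rfl fun x _ => Finset.sum_congr rfl fun i _ => Finset.sum_comm
        _ = ∑ x, ∑ y, ∑ i, ∑ j, (f x * f y) * ((ψ i x * ψ i y) * (ψ j x * ψ j y)) :=
            Finset.sum_congr rfl fun x _ => Finset.sum_comm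
        _ = ∑ x, ∑ y, f x * f y * (K x y) ^ 2 :=
            Finset.sum_congr rfl fun x _ => Finset.sum_congr rfl fun y _ => (expandK x y).symm
    rw [hB]
    have hle : ∑ x, ∑ y, f x * f y * (K x y) ^ 2
        ≤ ∑ x, ∑ y, ((f x) ^ 2 / 2 + (f y) ^ 2 / 2) * (K x y) ^ 2 := by
      refine Finset.sum_le_sum fun x _ => Finset.sum_le_sum fun y _ => ?_
      apply mul_le_mul_of_nonneg_right _ (sq_nonneg _)
      nlinarith [sq_nonneg (f x - f y)]
    refine hle.trans (le_of_eq ?_)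
    have hsplit : ∀ x y : V, ((f x) ^ 2 / 2 + (f y) ^ 2 / 2) * (K x y) ^ 2
        = (f x) ^ 2 / 2 * (K x y) ^ 2 + (f y) ^ 2 / 2 * (K x y) ^ 2 := fun x y => by ring
    simp only [hsplit, Finset.sum_add_distrib]
    have hA : ∑ x, ∑ y, (f x) ^ 2 / 2 * (K x y) ^ 2
        = ∑ x, (f x) ^ 2 / 2 * ((m : ℝ) / (n : ℝ)) := by
      refine Finset.sum_congr rfl fun x _ => ?_
      rw [← Finset.mul_sum, hKsq x]
    have hBb : ∑ x, ∑ y, (f y) ^ 2 / 2 * (K x y) ^ 2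
        = ∑ y, (f y) ^ 2 / 2 * ((m : ℝ) / (n : ℝ)) := by
      rw [Finset.sum_comm]
      refine Finset.sum_congr rfl fun y _ => ?_
      rw [← Finset.mul_sum]
      congr 1
      calc ∑ x, (K x y) ^ 2 = ∑ x, (K y x) ^ 2 :=
            Finset.sum_congr rfl fun x _ => by rw [hKsym]
        _ = (m : ℝ) / (n : ℝ) := hKsq y
    rw [hA, hBb, ← Finset.sum_add_distrib]
    rw [Finset.mul_sum]
    exact Finset.sum_congr rfl fun x _ => by ring
end
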